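/- For a finite set S of n points in general position in ℝ² and any q ∈ ℝ², let B(q;S) denote the number of pairs {x_i,x_j} ⊆ S such that q lies in the closed disk with diameter x_ix_j, and let T(q;S) denote the number of triples {x_i,x_j,x_k} ⊆ S such that q lies in the closed triangle x_ix_jx_k. Then (n-2)·B(q;S) ≥ 2·T(q;S). -/

import Mathlib

open scoped RealInnerProductSpace Classical

lemma core {E : Type*} [NormedAddCommGroup E] [InnerProductSpace ℝ E]
    {a b c q : E} (hab : a ≠ b) (hbc : b ≠ c) (hac : a ≠ c)
    (hq : q ∈ convexHull ℝ ({a, b, c} : Set E))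
    (h1 : 0 < ⟪a - q, b - q⟫) (h2 : 0 < ⟪b - q, c - q⟫) : False := by
  classical
  have hset : ({a, b, c} : Set E) = (({a, b, c} : Finset E) : Set E) := by simp
  rw [hset, Finset.convexHull_eq] at hq
  obtain ⟨w, hw0, hw1, hcm⟩ := hq
  rw [Finset.centerMass_eq_of_sum_1 _ _ hw1] at hcm
  have hna : a ∉ ({b, c} : Finset E) := by simp [hab, hac]
  have hnb : b ∉ ({c} : Finset E) := by simp [hbc]
  rw [Finset.sum_insert hna, Finset.sum_insert hnb, Finset.sum_singleton] at hw1
  have hwa : 0 ≤ w a := hw0 a (by simp)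
  have hwb : 0 ≤ w b := hw0 b (by simp)
  have hwc : 0 ≤ w c := hw0 c (by simp)
  have hzero : w a • (a - q) + w b • (b - q) + w c • (c - q) = 0 := by
    have : w a • (a - q) + w b • (b - q) + w c • (c - q)
        = (w a • a + w b • b + w c • c) - (w a + w b + w c) • q := by
      simp [smul_sub, add_smul]; abel
    rw [Finset.sum_insert hna, Finset.sum_insert hnb, Finset.sum_singleton] at hcm
    have hcm' : w a • a + w b • b + w c • c = q := by rw [← hcm]; abel
    have hw1' : w a + w b + w c = 1 := by linarith
    rw [this, hcm', hw1', one_smul, sub_self]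
  have hinner : w a * ⟪a - q, b - q⟫ + w b * ⟪b - q, b - q⟫ + w c * ⟪c - q, b - q⟫ = 0 := by
    have := congrArg (fun v => ⟪v, b - q⟫) hzero
    simpa [inner_add_left, real_inner_smul_left] using this
  have hcb : ⟪c - q, b - q⟫ = ⟪b - q, c - q⟫ := real_inner_comm _ _
  rw [hcb] at hinner
  have hbb : 0 ≤ ⟪b - q, b - q⟫ := real_inner_self_nonneg
  -- conclude all three terms are zero
  have hwa0 : w a = 0 := by nlinarith
  have hwc0 : w c = 0 := by nlinarith
  have hwb1 : w b = 1 := by linarith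
  have hbq : ⟪b - q, b - q⟫ = 0 := by nlinarith
  have : b - q = 0 := by
    have := inner_self_eq_zero (𝕜 := ℝ).mp hbq
    exact this
  rw [this] at h1
  simp at h1

lemma two_good {E : Type*} [NormedAddCommGroup E] [InnerProductSpace ℝ E]
    (q : E) (T : Finset E) (hT : T.card = 3)
    (hq : q ∈ convexHull ℝ (T : Set E)) :
    2 ≤ ((T.powersetCard 2).filter
      (fun P => ∃ x ∈ P, ∃ y ∈ P, x ≠ y ∧ ⟪x - q, y - q⟫ ≤ 0)).card := by
  classical
  obtain ⟨a, b, c, hab, hac, hbc, rfl⟩ := Finset.card_eq_three.mp hT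
  have hq' : q ∈ convexHull ℝ ({a, b, c} : Set E) := by
    have : (({a, b, c} : Finset E) : Set E) = {a, b, c} := by simp
    rwa [this] at hq
  set filt := (({a, b, c} : Finset E).powersetCard 2).filter
      (fun P => ∃ x ∈ P, ∃ y ∈ P, x ≠ y ∧ ⟪x - q, y - q⟫ ≤ 0) with hfilt
  have mem_pair : ∀ x y : E, x ≠ y → ({x, y} : Finset E) ⊆ {a, b, c} →
      ⟪x - q, y - q⟫ ≤ 0 → ({x, y} : Finset E) ∈ filt := by
    intro x y hxy hsub hle
    refine Finset.mem_filter.mpr ⟨Finset.mem_powersetCard.mpr ⟨hsub, ?_⟩,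
      ⟨x, by simp, y, by simp, hxy, hle⟩⟩
    rw [Finset.card_insert_of_notMem (by simp [hxy]), Finset.card_singleton]
  have hsab : ({a, b} : Finset E) ⊆ {a, b, c} := by intro x; simp; tauto
  have hsbc : ({b, c} : Finset E) ⊆ {a, b, c} := by intro x; simp; tauto
  have hsac : ({a, c} : Finset E) ⊆ {a, b, c} := by intro x; simp; tauto
  have ne1 : ({a, b} : Finset E) ≠ {b, c} := by
    intro h
    have : a ∈ ({b, c} : Finset E) := h ▸ (by simp)
    simp only [Finset.mem_insert, Finset.mem_singleton] at this
    exact this.elim hab hac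
  have ne2 : ({a, b} : Finset E) ≠ {a, c} := by
    intro h
    have : b ∈ ({a, c} : Finset E) := h ▸ (by simp)
    simp only [Finset.mem_insert, Finset.mem_singleton] at this
    exact this.elim (fun h' => hab h'.symm) hbc
  have ne3 : ({b, c} : Finset E) ≠ {a, c} := by
    intro h
    have : b ∈ ({a, c} : Finset E) := h ▸ (by simp)
    simp only [Finset.mem_insert, Finset.mem_singleton] at this
    exact this.elim (fun h' => hab h'.symm) hbc
  rw [show (2 : ℕ) = 1 + 1 from rfl]
  by_cases pab : ⟪a - q, b - q⟫ ≤ 0 <;>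
    by_cases pbc : ⟪b - q, c - q⟫ ≤ 0 <;>
      by_cases pac : ⟪a - q, c - q⟫ ≤ 0
  · exact Finset.one_lt_card.mpr ⟨_, mem_pair a b hab hsab pab, _, mem_pair b c hbc hsbc pbc, ne1⟩
  · exact Finset.one_lt_card.mpr ⟨_, mem_pair a b hab hsab pab, _, mem_pair b c hbc hsbc pbc, ne1⟩
  · exact Finset.one_lt_card.mpr ⟨_, mem_pair a b hab hsab pab, _, mem_pair a c hac hsac pac, ne2⟩
  ·
    exfalso
    have hq'' : q ∈ convexHull ℝ ({b, c, a} : Set E) := by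
      have : ({b, c, a} : Set E) = {a, b, c} := by ext x; simp; tauto
      rwa [this]
    exact core hbc (fun h => hac h.symm) (fun h => hab h.symm) hq''
      (not_le.mp pbc) (by rw [real_inner_comm]; exact not_le.mp pac)
  · exact Finset.one_lt_card.mpr ⟨_, mem_pair b c hbc hsbc pbc, _, mem_pair a c hac hsac pac, ne3⟩
  · -- pab false, pbc true, pac false : shared vertex a
    exfalso
    have hq'' : q ∈ convexHull ℝ ({b, a, c} : Set E) := by
      have : ({b, a, c} : Set E) = {a, b, c} := by ext x; simp; tauto
      rwa [this]
    exact core (fun h => hab h.symm) hac hbc hq''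
      (by rw [real_inner_comm]; exact not_le.mp pab) (not_le.mp pac)
  · exact absurd (core hab hbc hac hq' (not_le.mp pab) (not_le.mp pbc)) not_false
  · exact absurd (core hab hbc hac hq' (not_le.mp pab) (not_le.mp pbc)) not_false

/-- Number of (unordered) pairs of points of `S` whose diameter disk contains `q`. -/
noncomputable def diskPairCount (q : EuclideanSpace ℝ (Fin 2))
    (S : Finset (EuclideanSpace ℝ (Fin 2))) : ℕ :=
  ((S.powersetCard 2).filter
    (fun P => ∃ x ∈ P, ∃ y ∈ P, x ≠ y ∧ ⟪x - q, y - q⟫ ≤ 0)).card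

/-- Number of triples of points of `S` whose closed triangle contains `q`. -/
noncomputable def triangleCount (q : EuclideanSpace ℝ (Fin 2))
    (S : Finset (EuclideanSpace ℝ (Fin 2))) : ℕ :=
  ((S.powersetCard 3).filter (fun T => q ∈ convexHull ℝ (T : Set _))).card

theorem diskPairCount_vs_triangleCount
    (S : Finset (EuclideanSpace ℝ (Fin 2))) (n : ℕ) (hn : S.card = n) (h3 : 3 ≤ n)
    (hgp : ∀ x ∈ S, ∀ y ∈ S, ∀ z ∈ S, x ≠ y → y ≠ z → x ≠ z →
      ¬ Collinear ℝ ({x, y, z} : Set (EuclideanSpace ℝ (Fin 2))))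
    (q : EuclideanSpace ℝ (Fin 2)) :
    2 * triangleCount q S ≤ (n - 2) * diskPairCount q S := by
  classical
  set Tri := (S.powersetCard 3).filter
      (fun T : Finset (EuclideanSpace ℝ (Fin 2)) => q ∈ convexHull ℝ (T : Set _)) with hTriDef
  set Pr := (S.powersetCard 2).filter
      (fun P => ∃ x ∈ P, ∃ y ∈ P, x ≠ y ∧ ⟪x - q, y - q⟫ ≤ 0) with hPrDef
  have hTC : triangleCount q S = Tri.card := by
    rw [hTriDef, triangleCount]
    simp only [Finset.bind_def, Finset.sup_eq_biUnion, Finset.pure_def, Finset.biUnion_singleton]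
    rw [Finset.filter_image]
    exact Finset.card_image_of_injective _ Finset.coe_injective
  have hBC : diskPairCount q S = Pr.card := by rw [hPrDef, diskPairCount]
  -- lower bound on each triangle's good pairs
  have hlow : ∀ T ∈ Tri, 2 ≤ (Pr.filter (fun P => P ⊆ T)).card := by
    intro T hT
    rw [hTriDef, Finset.mem_filter, Finset.mem_powersetCard] at hT
    obtain ⟨⟨hTS, hT3⟩, hqT⟩ := hT
    have hsub : (T.powersetCard 2).filter
        (fun P => ∃ x ∈ P, ∃ y ∈ P, x ≠ y ∧ ⟪x - q, y - q⟫ ≤ 0)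
        ⊆ Pr.filter (fun P => P ⊆ T) := by
      intro P hP
      rw [Finset.mem_filter, Finset.mem_powersetCard] at hP
      obtain ⟨⟨hPT, hP2⟩, hgood⟩ := hP
      exact Finset.mem_filter.mpr ⟨Finset.mem_filter.mpr
        ⟨Finset.mem_powersetCard.mpr ⟨hPT.trans hTS, hP2⟩, hgood⟩, hPT⟩
    refine le_trans ?_ (Finset.card_le_card hsub)
    convert two_good q T hT3 hqT using 3
    exact rfl
  -- double counting
  have hswap : ∑ T ∈ Tri, (Pr.filter (fun P => P ⊆ T)).card
      = ∑ P ∈ Pr, (Tri.filter (fun T => P ⊆ T)).card := by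
    simp_rw [Finset.card_filter]
    exact Finset.sum_comm
  -- upper bound per pair
  have hup : ∀ P ∈ Pr, (Tri.filter (fun T => P ⊆ T)).card ≤ n - 2 := by
    intro P hP
    rw [hPrDef, Finset.mem_filter, Finset.mem_powersetCard] at hP
    obtain ⟨⟨hPS, hP2⟩, -⟩ := hP
    have hsub : Tri.filter (fun T => P ⊆ T) ⊆
        (S.powersetCard 3).filter (fun T => P ⊆ T) := by
      intro T hT
      rw [Finset.mem_filter] at hT ⊢
      exact ⟨(Finset.mem_filter.mp hT.1).1, hT.2⟩
    refine le_trans (Finset.card_le_card hsub) ?_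
    have hinj : ∀ T ∈ (S.powersetCard 3).filter (fun T => P ⊆ T),
        T \ P ∈ (S \ P).powersetCard 1 := by
      intro T hT
      rw [Finset.mem_filter, Finset.mem_powersetCard] at hT
      obtain ⟨⟨hTS, hT3⟩, hPT⟩ := hT
      refine Finset.mem_powersetCard.mpr ⟨Finset.sdiff_subset_sdiff hTS le_rfl, ?_⟩
      rw [Finset.card_sdiff_of_subset hPT, hT3, hP2]
    have hcard : ((S \ P).powersetCard 1).card = n - 2 := by
      rw [Finset.card_powersetCard, Finset.card_sdiff_of_subset hPS, hn, hP2, Nat.choose_one_right]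
    rw [← hcard]
    apply Finset.card_le_card_of_injOn (fun T => T \ P) hinj
    intro T1 h1 T2 h2 heq
    simp only at heq
    rw [Finset.coe_filter] at h1 h2
    obtain ⟨-, hPT1⟩ := h1
    obtain ⟨-, hPT2⟩ := h2
    have : P ∪ (T1 \ P) = P ∪ (T2 \ P) := by rw [heq]
    rwa [Finset.union_sdiff_of_subset hPT1, Finset.union_sdiff_of_subset hPT2] at this
  calc 2 * triangleCount q S = ∑ _T ∈ Tri, 2 := by
        rw [hTC, Finset.sum_const, smul_eq_mul, mul_comm]
    _ ≤ ∑ T ∈ Tri, (Pr.filter (fun P => P ⊆ T)).card := Finset.sum_le_sum hlow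
    _ = ∑ P ∈ Pr, (Tri.filter (fun T => P ⊆ T)).card := hswap
    _ ≤ ∑ _P ∈ Pr, (n - 2) := Finset.sum_le_sum hup
    _ = (n - 2) * diskPairCount q S := by
        rw [hBC, Finset.sum_const, smul_eq_mul, mul_comm]
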